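/- With the setup of the previous statement (functors i_*, i^*, j_!, j^* with i^* i_* ≅ Id, j^* j_! ≅ Id, j^* i_* = 0, i^* j_! = 0, and ideals I', I''), define I = { α | i^*(α) ∈ I', j^*(α) ∈ I'' }. Then i^*(I) = I' , where i^*(I) denotes the image ideal. Moreover I' = { α' a morphism of T' | i_*(α') ∈ I }. -/
import Mathlib


open CategoryTheory Category Limits

/-- A class of morphisms in a category. -/
abbrev MorphismClass (C : Type*) [Category C] := ∀ ⦃X Y : C⦄, (X ⟶ Y) → Prop

/-- An ideal of a preadditive category: an additive subgroup of each Hom-group, closed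
under arbitrary pre- and post-composition. -/
structure CatIdeal (C : Type*) [Category C] [Preadditive C] where
  mem : MorphismClass C
  zero_mem : ∀ (X Y : C), mem (0 : X ⟶ Y)
  neg_mem : ∀ ⦃X Y : C⦄ ⦃f : X ⟶ Y⦄, mem f → mem (-f)
  add_mem : ∀ ⦃X Y : C⦄ ⦃f g : X ⟶ Y⦄, mem f → mem g → mem (f + g)
  comp_mem : ∀ ⦃W X Y Z : C⦄ (h : W ⟶ X) ⦃f : X ⟶ Y⦄ (k : Y ⟶ Z),
    mem f → mem (h ≫ f ≫ k)

/-- The image ideal `F(I)`: all morphisms of the form `g ≫ F(α) ≫ h` with `α ∈ I`. -/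
def imageMem {C D : Type*} [Category C] [Category D] (F : C ⥤ D)
    (I : MorphismClass C) : MorphismClass D :=
  fun A B f => ∃ (X Y : C) (α : X ⟶ Y) (g : A ⟶ F.obj X) (h : F.obj Y ⟶ B),
    I α ∧ f = g ≫ F.map α ≫ h

/-- The glued morphism class `I = {α | i^*(α) ∈ I', j^*(α) ∈ I''}`. -/
def glueMem {T' T T'' : Type*} [Category T'] [Category T] [Category T'']
    [Preadditive T'] [Preadditive T'']
    (iUpper : T ⥤ T') (jUpper : T ⥤ T'')
    (I' : CatIdeal T') (I'' : CatIdeal T'') : MorphismClass T :=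
  fun _ _ f => I'.mem (iUpper.map f) ∧ I''.mem (jUpper.map f)

/-- With `I = {α | i^*(α) ∈ I', j^*(α) ∈ I''}`, one has `i^*(I) = I'` (image ideal) and
`I' = {α' | i_*(α') ∈ I}`. -/
theorem stmt3 {T' T T'' : Type*} [Category T'] [Category T] [Category T'']
    [Preadditive T'] [Preadditive T] [Preadditive T'']
    (iStar : T' ⥤ T) (iUpper : T ⥤ T') (jShriek : T'' ⥤ T) (jUpper : T ⥤ T'')
    [iStar.Additive] [iUpper.Additive] [jShriek.Additive] [jUpper.Additive]
    (e₁ : iStar ⋙ iUpper ≅ 𝟭 T') (e₂ : jShriek ⋙ jUpper ≅ 𝟭 T'')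
    (h₁ : ∀ X : T', IsZero (jUpper.obj (iStar.obj X)))
    (h₂ : ∀ X : T'', IsZero (iUpper.obj (jShriek.obj X)))
    (I' : CatIdeal T') (I'' : CatIdeal T'') :
    (∀ ⦃X Y : T'⦄ (f : X ⟶ Y),
        imageMem iUpper (glueMem iUpper jUpper I' I'') f ↔ I'.mem f) ∧
    (∀ ⦃X Y : T'⦄ (f : X ⟶ Y),
        I'.mem f ↔ glueMem iUpper jUpper I' I'' (iStar.map f)) := by

  have key : ∀ ⦃X Y : T'⦄ (f : X ⟶ Y),
      I'.mem f → glueMem iUpper jUpper I' I'' (iStar.map f) := by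
    intro X Y f hf
    constructor
    · have : iUpper.map (iStar.map f) = e₁.hom.app X ≫ f ≫ e₁.inv.app Y := by
        have := e₁.hom.naturality f
        simp only [Functor.comp_map, Functor.id_map] at this
        rw [← assoc, ← this]; simp
      rw [this]
      exact I'.comp_mem _ _ hf
    · have : jUpper.map (iStar.map f) = 0 := (h₁ X).eq_of_src _ _
      rw [this]; exact I''.zero_mem _ _
  refine ⟨fun X Y f => ⟨?_, ?_⟩, fun X Y f => ⟨key f, ?_⟩⟩
  · rintro ⟨A, B, α, g, h, ⟨hα, _⟩, rfl⟩
    exact I'.comp_mem _ _ hα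
  · intro hf
    refine ⟨iStar.obj X, iStar.obj Y, iStar.map f, e₁.inv.app X, e₁.hom.app Y, key f hf, ?_⟩
    have := e₁.hom.naturality f
    simp only [Functor.comp_map, Functor.id_map] at this
    rw [this]; simp
  · rintro ⟨hf, -⟩
    have : f = e₁.inv.app X ≫ iUpper.map (iStar.map f) ≫ e₁.hom.app Y := by
      have := e₁.hom.naturality f
      simp only [Functor.comp_map, Functor.id_map] at this
      rw [this]; simp
    rw [this]
    exact I'.comp_mem _ _ hf
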